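/- Every permutation σ ∈ S_{n+2} is conjugate to its inverse σ⁻¹ by an element of the subgroup S_n × S_2 (permutations preserving {1,…,n} and {n+1,n+2}). -/

import Mathlib

open Equiv Equiv.Perm

noncomputable section ReverseAux

variable {α : Type*}

/-- The `SameCycle` setoid. -/
def scSetoid (σ : Equiv.Perm α) : Setoid α :=
  ⟨σ.SameCycle, Equiv.Perm.SameCycle.equivalence σ⟩

open Classical in
/-- A basepoint for each cycle of `σ`, constant on cycles, equal to `x` on the
cycle of `x` and to `y` on the cycle of `y` (if distinct from the cycle of `x`). -/
def bp (σ : Equiv.Perm α) (x y : α) (z : α) : α :=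
  if σ.SameCycle x z then x
  else if σ.SameCycle y z then y
  else Quotient.out (Quotient.mk (scSetoid σ) z)

lemma bp_sameCycle (σ : Equiv.Perm α) (x y z : α) : σ.SameCycle (bp σ x y z) z := by
  unfold bp
  split_ifs with h1 h2
  · exact h1
  · exact h2
  · exact Quotient.mk_out (s := scSetoid σ) z

lemma bp_congr (σ : Equiv.Perm α) (x y : α) {z w : α} (h : σ.SameCycle z w) :
    bp σ x y z = bp σ x y w := by
  unfold bp
  have e1 : σ.SameCycle x z ↔ σ.SameCycle x w := ⟨fun h' => h'.trans h, fun h' => h'.trans h.symm⟩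
  have e2 : σ.SameCycle y z ↔ σ.SameCycle y w := ⟨fun h' => h'.trans h, fun h' => h'.trans h.symm⟩
  have e3 : Quotient.mk (scSetoid σ) z = Quotient.mk (scSetoid σ) w := Quotient.sound h
  split_ifs with h1 h2 h3 h4 <;> simp_all

open Classical in
/-- The shift constant: on the common cycle of `x` and `y` it is a `k` with `σ^k x = y`,
elsewhere `0`. -/
def kc (σ : Equiv.Perm α) (x y : α) (z : α) : ℤ :=
  if h : σ.SameCycle x z ∧ σ.SameCycle x y then h.2.choose else 0

lemma kc_congr (σ : Equiv.Perm α) (x y : α) {z w : α} (h : σ.SameCycle z w) :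
    kc σ x y z = kc σ x y w := by
  unfold kc
  have e1 : σ.SameCycle x z ↔ σ.SameCycle x w := ⟨fun h' => h'.trans h, fun h' => h'.trans h.symm⟩
  split_ifs with h1 h2 <;> simp_all

/-- The discrete log of `z` from its basepoint. -/
def jexp (σ : Equiv.Perm α) (x y : α) (z : α) : ℤ :=
  (bp_sameCycle σ x y z).choose

lemma jexp_spec (σ : Equiv.Perm α) (x y z : α) :
    (σ ^ jexp σ x y z) (bp σ x y z) = z :=
  (bp_sameCycle σ x y z).choose_spec

/-- The reversing function. -/
def rev (σ : Equiv.Perm α) (x y : α) (z : α) : α :=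
  (σ ^ (kc σ x y z - 2 * jexp σ x y z)) z

lemma zpow_fix (σ : Equiv.Perm α) {z : α} {m : ℤ} (h : (σ ^ m) z = z) (t : ℤ) :
    (σ ^ (m * t)) z = z := by
  induction t using Int.induction_on with
  | zero => simp
  | succ k ih =>
      have : (σ ^ (m * (k + 1))) z = (σ ^ m) ((σ ^ (m * k)) z) := by
        rw [mul_add, mul_one, add_comm, zpow_add, Equiv.Perm.mul_apply]
      rw [this, ih, h]
  | pred k ih =>
      have : (σ ^ (m * (-k - 1))) z = (σ ^ (-m)) ((σ ^ (m * (-k : ℤ))) z) := by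
        rw [show m * (-k - 1) = -m + m * (-k : ℤ) by ring, zpow_add, Equiv.Perm.mul_apply]
      rw [this, ih]
      nth_rewrite 1 [← h]
      rw [← Equiv.Perm.mul_apply, ← zpow_add, neg_add_cancel, zpow_zero, Equiv.Perm.one_apply]

/-- Well-definedness: the value doesn't depend on the choice of discrete log. -/
lemma rev_eq_of_valid (σ : Equiv.Perm α) (x y z : α) {j : ℤ}
    (hj : (σ ^ j) (bp σ x y z) = z) :
    rev σ x y z = (σ ^ (kc σ x y z - 2 * j)) z := by
  set b := bp σ x y z
  set j0 := jexp σ x y z with hj0def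
  have hj0 : (σ ^ j0) b = z := jexp_spec σ x y z
  -- σ^(j - j0) fixes z
  have hfix : (σ ^ (j - j0)) z = z := by
    have : (σ ^ (-j0)) z = b := by
      rw [← hj0, ← Equiv.Perm.mul_apply, ← zpow_add, neg_add_cancel, zpow_zero,
        Equiv.Perm.one_apply]
    calc (σ ^ (j - j0)) z = (σ ^ j) ((σ ^ (-j0)) z) := by
          rw [← Equiv.Perm.mul_apply, ← zpow_add, sub_eq_add_neg]
      _ = z := by rw [this, hj]
  have h2 : (σ ^ ((j - j0) * 2)) z = z := zpow_fix σ hfix 2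
  show (σ ^ (kc σ x y z - 2 * j0)) z = (σ ^ (kc σ x y z - 2 * j)) z
  calc (σ ^ (kc σ x y z - 2 * j0)) z
      = (σ ^ (kc σ x y z - 2 * j)) ((σ ^ ((j - j0) * 2)) z) := by
        rw [← Equiv.Perm.mul_apply, ← zpow_add]; ring_nf
    _ = (σ ^ (kc σ x y z - 2 * j)) z := by rw [h2]

lemma rev_sameCycle (σ : Equiv.Perm α) (x y z : α) : σ.SameCycle z (rev σ x y z) :=
  ⟨_, rfl⟩

lemma rev_apply (σ : Equiv.Perm α) (x y z : α) :
    rev σ x y (σ z) = σ⁻¹ (rev σ x y z) := by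
  have hb : bp σ x y (σ z) = bp σ x y z := (bp_congr σ x y ⟨-1, by simp⟩)
  have hk : kc σ x y (σ z) = kc σ x y z := (kc_congr σ x y ⟨-1, by simp⟩)
  have hvalid : (σ ^ (jexp σ x y z + 1)) (bp σ x y (σ z)) = σ z := by
    rw [hb, add_comm, zpow_add, zpow_one, Equiv.Perm.mul_apply, jexp_spec]
  have := rev_eq_of_valid σ x y (σ z) hvalid
  rw [this, hk]
  have h1 : σ z = (σ ^ (1:ℤ)) z := by simp
  have h2 : σ⁻¹ (rev σ x y z) = (σ ^ (-1 + (kc σ x y z - 2 * jexp σ x y z))) z := by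
    unfold rev
    rw [zpow_add, Equiv.Perm.mul_apply, zpow_neg_one]
  rw [h1, h2, ← Equiv.Perm.mul_apply, ← zpow_add]
  congr 1
  ring

lemma rev_involutive (σ : Equiv.Perm α) (x y : α) : Function.Involutive (rev σ x y) := by
  intro z
  have hsc : σ.SameCycle z (rev σ x y z) := rev_sameCycle σ x y z
  have hb : bp σ x y (rev σ x y z) = bp σ x y z := (bp_congr σ x y hsc).symm
  have hk : kc σ x y (rev σ x y z) = kc σ x y z := (kc_congr σ x y hsc).symm
  have hvalid : (σ ^ (kc σ x y z - jexp σ x y z)) (bp σ x y (rev σ x y z)) = rev σ x y z := by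
    rw [hb, show kc σ x y z - jexp σ x y z = (kc σ x y z - 2 * jexp σ x y z) + jexp σ x y z
      by ring, zpow_add, Equiv.Perm.mul_apply, jexp_spec]
    rfl
  have := rev_eq_of_valid σ x y (rev σ x y z) hvalid
  rw [this, hk]
  unfold rev
  rw [← Equiv.Perm.mul_apply, ← zpow_add]
  rw [show kc σ x y z - 2 * (kc σ x y z - jexp σ x y z) + (kc σ x y z - 2 * jexp σ x y z) = 0
    by ring, zpow_zero, Equiv.Perm.one_apply]

end ReverseAux

noncomputable section ReverseAux2

variable {α : Type*}

/-- The reversing permutation. -/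
noncomputable def revPerm (σ : Equiv.Perm α) (x y : α) : Equiv.Perm α :=
  (rev_involutive σ x y).toPerm

lemma revPerm_apply (σ : Equiv.Perm α) (x y z : α) : revPerm σ x y z = rev σ x y z := rfl

lemma revPerm_inv (σ : Equiv.Perm α) (x y : α) : (revPerm σ x y)⁻¹ = revPerm σ x y := by
  ext z
  have := rev_involutive σ x y z
  rw [Equiv.Perm.inv_eq_iff_eq, revPerm_apply, revPerm_apply, this]

lemma revPerm_conj (σ : Equiv.Perm α) (x y : α) :
    revPerm σ x y * σ * (revPerm σ x y)⁻¹ = σ⁻¹ := by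
  rw [revPerm_inv]
  ext z
  simp only [Equiv.Perm.mul_apply, revPerm_apply]
  rw [rev_apply σ x y (rev σ x y z), rev_involutive]

lemma revPerm_boundary (σ : Equiv.Perm α) (x y : α) :
    (revPerm σ x y x = x ∧ revPerm σ x y y = y) ∨
      (revPerm σ x y x = y ∧ revPerm σ x y y = x) := by
  classical
  have neg2fix : ∀ (z : α) (j : ℤ), (σ ^ j) z = z → ∀ c : ℤ, (σ ^ (c - 2 * j)) z = (σ ^ c) z := by
    intro z j hj c
    have := zpow_fix σ hj (-2)
    calc (σ ^ (c - 2 * j)) z = (σ ^ c) ((σ ^ (j * (-2))) z) := by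
          rw [← Equiv.Perm.mul_apply, ← zpow_add]; congr 1; ring
      _ = (σ ^ c) z := by rw [this]
  by_cases hxy : σ.SameCycle x y
  · right
    have hbx : bp σ x y x = x := by unfold bp; rw [if_pos (Equiv.Perm.SameCycle.refl σ x)]
    have hby : bp σ x y y = x := by unfold bp; rw [if_pos hxy]
    have hkx : kc σ x y x = hxy.choose := by
      unfold kc; rw [dif_pos ⟨Equiv.Perm.SameCycle.refl σ x, hxy⟩]
    have hky : kc σ x y y = hxy.choose := by
      unfold kc; rw [dif_pos ⟨hxy, hxy⟩]
    constructor
    · -- revPerm x = y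
      rw [revPerm_apply]
      unfold rev
      rw [hkx]
      have hjx : (σ ^ jexp σ x y x) x = x := by
        have := jexp_spec σ x y x; rwa [hbx] at this
      rw [neg2fix x _ hjx, hxy.choose_spec]
    · -- revPerm y = x
      rw [revPerm_apply]
      have hvalid : (σ ^ hxy.choose) (bp σ x y y) = y := by rw [hby]; exact hxy.choose_spec
      rw [rev_eq_of_valid σ x y y hvalid, hky]
      have : (σ ^ (hxy.choose - 2 * hxy.choose)) y = (σ ^ (-hxy.choose)) y := by
        congr 1; ring
      rw [this]
      have h0 : (σ ^ (-Exists.choose hxy)) ((σ ^ Exists.choose hxy) x) = x := by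
        rw [← Equiv.Perm.mul_apply, ← zpow_add, neg_add_cancel, zpow_zero,
          Equiv.Perm.one_apply]
      rw [hxy.choose_spec] at h0
      exact h0
  · left
    have hbx : bp σ x y x = x := by unfold bp; rw [if_pos (Equiv.Perm.SameCycle.refl σ x)]
    have hby : bp σ x y y = y := by
      unfold bp; rw [if_neg hxy, if_pos (Equiv.Perm.SameCycle.refl σ y)]
    have hkx : kc σ x y x = 0 := by
      unfold kc; rw [dif_neg (by tauto)]
    have hky : kc σ x y y = 0 := by
      unfold kc; rw [dif_neg (by tauto)]
    constructor
    · rw [revPerm_apply]; unfold rev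
      rw [hkx]
      have hjx : (σ ^ jexp σ x y x) x = x := by
        have := jexp_spec σ x y x; rwa [hbx] at this
      rw [neg2fix x _ hjx 0, zpow_zero, Equiv.Perm.one_apply]
    · rw [revPerm_apply]; unfold rev
      rw [hky]
      have hjy : (σ ^ jexp σ x y y) y = y := by
        have := jexp_spec σ x y y; rwa [hby] at this
      rw [neg2fix y _ hjy 0, zpow_zero, Equiv.Perm.one_apply]

end ReverseAux2

/-- Every permutation of `{1,…,n+2}` is conjugate to its inverse by an element of
the subgroup `S_n × S_2` (permutations preserving the two blocks). -/
theorem perm_conj_inv_by_block_subgroup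
    (n : ℕ) (σ : Equiv.Perm (Sum (Fin n) (Fin 2))) :
    ∃ (a : Equiv.Perm (Fin n)) (b : Equiv.Perm (Fin 2)),
      (Equiv.Perm.sumCongrHom (Fin n) (Fin 2) (a, b)) * σ *
        (Equiv.Perm.sumCongrHom (Fin n) (Fin 2) (a, b))⁻¹ = σ⁻¹ := by
  classical
  set τ := revPerm σ (Sum.inr 0) (Sum.inr 1) with hτ
  have hconj := revPerm_conj σ (Sum.inr 0) (Sum.inr 1)
  have hbd := revPerm_boundary σ (Sum.inr 0) (Sum.inr 1)
  have hmaps : Set.MapsTo τ (Set.range Sum.inl) (Set.range Sum.inl) := by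
    rintro _ ⟨w, rfl⟩
    rcases h : τ (Sum.inl w) with w' | j
    · exact ⟨w', rfl⟩
    · exfalso
      have hj : j = 0 ∨ j = 1 := by
        rcases j with ⟨jv, hjv⟩
        have : jv = 0 ∨ jv = 1 := by omega
        rcases this with rfl | rfl
        · exact Or.inl rfl
        · exact Or.inr rfl
      rcases hbd with ⟨h0, h1⟩ | ⟨h0, h1⟩ <;> rcases hj with rfl | rfl
      · exact absurd (τ.injective (h.trans h0.symm)) (by simp)
      · exact absurd (τ.injective (h.trans h1.symm)) (by simp)
      · exact absurd (τ.injective (h.trans h1.symm)) (by simp)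
      · exact absurd (τ.injective (h.trans h0.symm)) (by simp)
  obtain ⟨⟨a, b⟩, hab⟩ := Equiv.Perm.mem_sumCongrHom_range_of_perm_mapsTo_inl hmaps
  exact ⟨a, b, by rw [hab]; exact hconj⟩
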